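/- Let d ≥ 3 be odd and let G be a subgroup of SO(d) that is irreducible (its elements have no common invariant linear subspace other than {0} and ℝ^d). Then every matrix A ∈ G has a Perron eigenvalue, and there is no proper cone K ⊆ ℝ^d with A K ⊆ K for every A ∈ G. -/

import Mathlib

open Matrix

open scoped Classical

/-- A complex number `μ` is an eigenvalue of the complex matrix `M`. -/
def IsEigenvalueC {n : Type*} [Fintype n] (M : Matrix n n ℂ) (μ : ℂ) : Prop :=
  ∃ v : n → ℂ, v ≠ 0 ∧ M.mulVec v = μ • v

/-- The spectral radius of a real matrix: the maximum of the moduli of the complex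
eigenvalues of its complexification. -/
noncomputable def spectralRadius' {n : Type*} [Fintype n] (A : Matrix n n ℝ) : ℝ :=
  sSup {r : ℝ | ∃ μ : ℂ, IsEigenvalueC (A.map (fun x : ℝ => (x : ℂ))) μ ∧ r = ‖μ‖}

/-- `A` has a Perron eigenvalue: its spectral radius is a nonnegative eigenvalue of `A`. -/
def HasPerronEigenvalue {n : Type*} [Fintype n] (A : Matrix n n ℝ) : Prop :=
  0 ≤ spectralRadius' A ∧ ∃ v : n → ℝ, v ≠ 0 ∧ A.mulVec v = spectralRadius' A • v

/-- The expansion index of a real matrix: the sum, over all (complex) leading eigenvalues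
(those of modulus equal to the spectral radius), of their geometric multiplicities. -/
noncomputable def expansionIndex {n : Type*} [Fintype n] [DecidableEq n]
    (A : Matrix n n ℝ) : ℕ :=
  ∑ μ ∈ (((A.map (fun x : ℝ => (x : ℂ))).charpoly.roots.toFinset).filter
      (fun μ => ‖μ‖ = spectralRadius' A)),
    Module.finrank ℂ
      (LinearMap.ker (Matrix.toLin' ((A.map (fun x : ℝ => (x : ℂ))) - μ • (1 : Matrix n n ℂ))))

/-- A (multiplicative) semigroup of matrices: a nonempty set closed under multiplication. -/
def IsMatrixSemigroup {n : Type*} [Fintype n] (S : Set (Matrix n n ℝ)) : Prop :=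
  S.Nonempty ∧ ∀ A ∈ S, ∀ B ∈ S, A * B ∈ S

/-- An irreducible set of matrices: no common invariant subspace other than `{0}` and the
whole space. -/
def MatIrreducible {n : Type*} [Fintype n] (S : Set (Matrix n n ℝ)) : Prop :=
  ¬ ∃ V : Submodule ℝ (n → ℝ), V ≠ ⊥ ∧ V ≠ ⊤ ∧ ∀ A ∈ S, ∀ x ∈ V, A.mulVec x ∈ V

/-- A proper cone: a closed convex cone with nonempty interior which is pointed. -/
def IsProperCone {n : Type*} [Fintype n] (K : Set (n → ℝ)) : Prop :=
  IsClosed K ∧ (∀ x ∈ K, ∀ y ∈ K, x + y ∈ K) ∧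
    (∀ t : ℝ, 0 ≤ t → ∀ x ∈ K, t • x ∈ K) ∧
    (interior K).Nonempty ∧ (∀ x ∈ K, -x ∈ K → x = 0)

theorem aux_eig_mod_one {n : Type*} [Fintype n] [DecidableEq n] {A : Matrix n n ℝ}
    (hA : Aᵀ * A = 1) {μ : ℂ} (h : IsEigenvalueC (A.map (fun x : ℝ => (x : ℂ))) μ) :
    ‖μ‖ = 1 := by
  obtain ⟨v, hv, hMv⟩ := h
  set M := A.map (fun x : ℝ => (x : ℂ)) with hM
  have hMH : Mᴴ * M = 1 := by
    have h1 : Mᴴ = Aᵀ.map (fun x : ℝ => (x : ℂ)) := by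
      ext i j; simp [M, conjTranspose_apply]
    have h2 : ((Aᵀ * A).map (fun x : ℝ => (x : ℂ))) = (Aᵀ.map (fun x : ℝ => (x : ℂ))) * (A.map (fun x : ℝ => (x : ℂ))) :=
      Matrix.map_mul (f := Complex.ofRealHom)
    rw [h1, ← h2, hA]
    ext i j; by_cases hij : i = j <;> simp [hij, Matrix.one_apply]
  have key : star (M.mulVec v) ⬝ᵥ M.mulVec v = star v ⬝ᵥ v := by
    rw [star_mulVec, ← dotProduct_mulVec, mulVec_mulVec, hMH, one_mulVec]
  have hdot : star v ⬝ᵥ v = ((∑ i, Complex.normSq (v i) : ℝ) : ℂ) := by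
    push_cast
    refine Finset.sum_congr rfl fun i _ => ?_
    simp [Complex.normSq_eq_conj_mul_self]
  have hvv : star v ⬝ᵥ v ≠ 0 := by
    rw [hdot]
    intro hc
    apply hv
    have hsum : (∑ i, Complex.normSq (v i) : ℝ) = 0 := by exact_mod_cast hc
    have hall := (Finset.sum_eq_zero_iff_of_nonneg
      (fun i _ => Complex.normSq_nonneg (v i))).mp hsum
    funext i
    exact Complex.normSq_eq_zero.mp (hall i (Finset.mem_univ i))
  rw [hMv] at key
  have expand : star (μ • v) ⬝ᵥ (μ • v) = ((starRingEnd ℂ) μ * μ) * (star v ⬝ᵥ v) := by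
    simp only [dotProduct, Pi.smul_apply, Pi.star_apply, smul_eq_mul, star_mul',
      Finset.mul_sum, starRingEnd_apply]
    exact Finset.sum_congr rfl fun i _ => by ring
  have hkey2 : ((starRingEnd ℂ) μ * μ) * (star v ⬝ᵥ v) = star v ⬝ᵥ v := by
    rw [← expand]; exact key
  have hmu : (starRingEnd ℂ μ) * μ = 1 := by
    refine mul_right_cancel₀ hvv ?_
    rw [one_mul]; exact hkey2
  have h2 : Complex.normSq μ = 1 := by
    have := Complex.normSq_eq_conj_mul_self (z := μ)
    rw [hmu] at this
    exact_mod_cast this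
  have h3 : ‖μ‖ ^ 2 = 1 := by
    rw [Complex.sq_norm]; exact h2
  nlinarith [norm_nonneg μ]

theorem aux_fixed_vec {d : ℕ} (hodd : Odd d) {A : Matrix (Fin d) (Fin d) ℝ}
    (hA : Aᵀ * A = 1) (hdet : A.det = 1) :
    ∃ v : Fin d → ℝ, v ≠ 0 ∧ A.mulVec v = v := by
  have hdetsub : (A - 1).det = 0 := by
    have h1 : (A - 1).det = (1 - Aᵀ).det := by
      have : Aᵀ * (A - 1) = 1 - Aᵀ := by
        rw [Matrix.mul_sub, hA, Matrix.mul_one]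
      calc (A - 1).det = Aᵀ.det * (A - 1).det := by
            rw [Matrix.det_transpose, hdet, one_mul]
        _ = (Aᵀ * (A - 1)).det := (Matrix.det_mul _ _).symm
        _ = (1 - Aᵀ).det := by rw [this]
    have h2 : (1 - Aᵀ).det = (1 - A).det := by
      rw [show (1 - Aᵀ) = (1 - A)ᵀ by rw [Matrix.transpose_sub, Matrix.transpose_one],
        Matrix.det_transpose]
    have h3 : (1 - A).det = (-1 : ℝ) ^ d * (A - 1).det := by
      rw [show (1 : Matrix (Fin d) (Fin d) ℝ) - A = -(A - 1) by rw [neg_sub], Matrix.det_neg]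
      simp
    rw [h2, h3, hodd.neg_one_pow] at h1
    linarith
  obtain ⟨v, hv, hker⟩ := (Matrix.exists_mulVec_eq_zero_iff).mpr hdetsub
  refine ⟨v, hv, ?_⟩
  rwa [Matrix.sub_mulVec, Matrix.one_mulVec, sub_eq_zero] at hker

theorem aux_spec_one {d : ℕ} (hodd : Odd d) {A : Matrix (Fin d) (Fin d) ℝ}
    (hA : Aᵀ * A = 1) (hdet : A.det = 1) : spectralRadius' A = 1 := by
  obtain ⟨v, hv, hAv⟩ := aux_fixed_vec hodd hA hdet
  have hone : IsEigenvalueC (A.map (fun x : ℝ => (x : ℂ))) 1 := by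
    refine ⟨(fun x : ℝ => (x : ℂ)) ∘ v, ?_, ?_⟩
    · intro hc
      apply hv
      funext i
      have : ((v i : ℂ)) = 0 := congrFun hc i
      exact_mod_cast this
    · funext i
      rw [one_smul]
      have h := (RingHom.map_mulVec (Complex.ofRealHom) A v i).symm
      rw [hAv] at h
      exact h
  have hset : {r : ℝ | ∃ μ : ℂ, IsEigenvalueC (A.map (fun x : ℝ => (x : ℂ))) μ ∧ r = ‖μ‖}
      = {1} := by
    apply Set.eq_singleton_iff_unique_mem.mpr
    constructor
    · exact ⟨1, hone, by simp⟩
    · rintro r ⟨μ, hμ, rfl⟩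
      exact aux_eig_mod_one hA hμ
  rw [spectralRadius', hset, csSup_singleton]

theorem aux_N_mulVec {d : ℕ} {A : Matrix (Fin d) (Fin d) ℝ} (hA : Aᵀ * A = 1) (x : Fin d → ℝ) :
    ∑ i, (A.mulVec x i) ^ 2 = ∑ i, x i ^ 2 := by
  have h1 : ∀ y : Fin d → ℝ, ∑ i, y i ^ 2 = y ⬝ᵥ y := by
    intro y; simp [dotProduct, sq]
  rw [h1, h1]
  rw [dotProduct_mulVec, ← Matrix.mulVec_transpose, Matrix.mulVec_mulVec, hA, Matrix.one_mulVec]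

open MeasureTheory in
theorem aux_no_cone {d : ℕ} (hd : 3 ≤ d)
    (G : Set (Matrix (Fin d) (Fin d) ℝ))
    (hSO : ∀ A ∈ G, Aᵀ * A = 1 ∧ A.det = 1)
    (hinv : ∀ A ∈ G, A⁻¹ ∈ G)
    (hirr : MatIrreducible G)
    (K : Set (Fin d → ℝ)) (hK : IsProperCone K)
    (hKinv : ∀ A ∈ G, ∀ x ∈ K, A.mulVec x ∈ K) : False := by
  obtain ⟨hKcl, hKadd, hKsmul, hKint, hKpt⟩ := hK
  haveI : NeZero d := ⟨by omega⟩
  -- convexity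
  have hKconv : Convex ℝ K := by
    intro x hx y hy a b ha hb hab
    exact hKadd _ (hKsmul a ha x hx) _ (hKsmul b hb y hy)
  -- 0 ∈ K
  obtain ⟨u₀, hu₀⟩ := hKint
  have h0K : (0 : Fin d → ℝ) ∈ K := by
    have := hKsmul 0 le_rfl u₀ (interior_subset hu₀)
    simpa using this
  -- nonzero interior point
  have hu₀ne : u₀ ≠ 0 := by
    intro h0
    rw [h0] at hu₀
    obtain ⟨ε, hε, hball⟩ := Metric.mem_nhds_iff.mp (mem_interior_iff_mem_nhds.mp hu₀)
    set w : Fin d → ℝ := fun _ => ε / 2 with hw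
    have hwball : ∀ v : Fin d → ℝ, (∀ i, |v i| ≤ ε / 2) → v ∈ Metric.ball (0 : Fin d → ℝ) ε := by
      intro v hv
      rw [Metric.mem_ball, dist_zero_right]
      calc ‖v‖ ≤ ε / 2 := by
            rw [pi_norm_le_iff_of_nonneg (by positivity)]
            intro i; simpa using hv i
        _ < ε := by linarith
    have habs : |ε / 2| ≤ ε / 2 := le_of_eq (abs_of_nonneg (by positivity))
    have hwK : w ∈ K := hball (hwball w (fun i => habs))
    have hwK' : -w ∈ K := hball (hwball (-w) (fun i => by
      simpa [hw, abs_neg] using habs))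
    have := hKpt w hwK hwK'
    have := congrFun this ⟨0, by omega⟩
    simp [hw] at this
    linarith
  set u := u₀
  set N : (Fin d → ℝ) → ℝ := fun x => ∑ i, x i ^ 2 with hN
  have hNcont : Continuous N := by
    apply continuous_finset_sum
    intro i _
    exact (continuous_apply i).pow 2
  set R : ℝ := N u + 1 with hR
  set C : Set (Fin d → ℝ) := K ∩ {x | N x ≤ R} with hC
  have hCcl : IsClosed C := hKcl.inter (isClosed_le hNcont continuous_const)
  have hCbd : Bornology.IsBounded C := by
    have : C ⊆ Metric.closedBall 0 (Real.sqrt R) := by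
      rintro x ⟨-, hx⟩
      rw [Metric.mem_closedBall, dist_zero_right,
        pi_norm_le_iff_of_nonneg (Real.sqrt_nonneg R)]
      intro i
      have h1 : x i ^ 2 ≤ R := by
        refine le_trans ?_ hx
        exact Finset.single_le_sum (fun j _ => sq_nonneg (x j)) (Finset.mem_univ i)
      simpa using Real.abs_le_sqrt h1
    exact Metric.isBounded_closedBall.subset this
  have hCcompact : IsCompact C := Metric.isCompact_of_isClosed_isBounded hCcl hCbd
  have hCsubK : C ⊆ K := Set.inter_subset_left
  -- integrability
  have hint : IntegrableOn (fun x : Fin d → ℝ => x) C volume :=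
    ContinuousOn.integrableOn_compact hCcompact continuousOn_id
  set b : Fin d → ℝ := ∫ x in C, x ∂volume with hb
  -- invariance of C and of b
  have hfix : ∀ A ∈ G, A.mulVec b = b := by
    intro A hA
    obtain ⟨hAo, hAdet⟩ := hSO A hA
    have hdet0 : A.det ≠ 0 := by rw [hAdet]; norm_num
    set L : (Fin d → ℝ) →ₗ[ℝ] (Fin d → ℝ) := Matrix.toLin' A with hL
    have hLapp : ∀ x, L x = A.mulVec x := fun x => Matrix.toLin'_apply A x
    have hker : LinearMap.ker L = ⊥ := by
      rw [LinearMap.ker_eq_bot']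
      intro v hv
      by_contra hvne
      have : A.det = 0 := Matrix.exists_mulVec_eq_zero_iff.mp ⟨v, hvne, by rw [← hLapp]; exact hv⟩
      exact hdet0 this
    have hLdet : LinearMap.det L = 1 := by rw [hL, LinearMap.det_toLin', hAdet]
    have hMP : MeasurePreserving L volume volume := by
      refine ⟨L.continuous_of_finiteDimensional.measurable, ?_⟩
      rw [Real.map_linearMap_volume_pi_eq_smul_volume_pi (by rw [hLdet]; norm_num), hLdet]
      simp
    have hemb : MeasurableEmbedding L :=
      (LinearMap.isClosedEmbedding_of_injective hker).measurableEmbedding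
    have hpre : L ⁻¹' C = C := by
      ext x
      simp only [Set.mem_preimage, hC, Set.mem_inter_iff, Set.mem_setOf_eq, hLapp]
      constructor
      · rintro ⟨h1, h2⟩
        have hx : x = A⁻¹.mulVec (A.mulVec x) := by
          rw [Matrix.mulVec_mulVec, Matrix.nonsing_inv_mul A (isUnit_iff_ne_zero.mpr hdet0), Matrix.one_mulVec]
        constructor
        · rw [hx]; exact hKinv A⁻¹ (hinv A hA) _ h1
        · calc N x = N (A.mulVec x) := (aux_N_mulVec hAo x).symm
            _ ≤ R := h2
      · rintro ⟨h1, h2⟩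
        refine ⟨hKinv A hA x h1, ?_⟩
        calc N (A.mulVec x) = N x := aux_N_mulVec hAo x
          _ ≤ R := h2
    have hceq : ∀ x, (LinearMap.toContinuousLinearMap L) x = A.mulVec x := by
      intro x
      rw [LinearMap.coe_toContinuousLinearMap']
      exact hLapp x
    have hcomp : (LinearMap.toContinuousLinearMap L) b =
        ∫ x in C, (LinearMap.toContinuousLinearMap L) x ∂volume :=
      ((LinearMap.toContinuousLinearMap L).integral_comp_comm hint).symm
    have hkey : ∫ x in C, L x ∂volume = b := by
      have h := hMP.setIntegral_preimage_emb hemb (fun y => y) C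
      rw [hpre] at h
      exact h
    calc A.mulVec b = (LinearMap.toContinuousLinearMap L) b := (hceq b).symm
      _ = ∫ x in C, (LinearMap.toContinuousLinearMap L) x ∂volume := hcomp
      _ = ∫ x in C, L x ∂volume := by
          simp only [LinearMap.coe_toContinuousLinearMap']
      _ = b := hkey
  -- separating functional
  have hnegu : -u ∉ K := by
    intro hc
    exact hu₀ne (hKpt u (interior_subset hu₀) hc)
  obtain ⟨f, s, hfs, hfK⟩ := geometric_hahn_banach_point_closed hKconv hKcl hnegu
  have hs0 : s < 0 := by
    have := hfK 0 h0K
    simpa using this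
  have hfnonneg : ∀ y ∈ K, 0 ≤ f y := by
    intro y hy
    by_contra hneg
    push_neg at hneg
    have ht : 0 ≤ (s - 1) / f y := by
      exact div_nonneg_iff.mpr (Or.inr ⟨by linarith, le_of_lt hneg⟩)
    have := hfK _ (hKsmul _ ht y hy)
    rw [f.map_smul, smul_eq_mul, div_mul_cancel₀ _ (ne_of_lt hneg)] at this
    linarith
  have hfu : 0 < f u := by
    have : f (-u) = -f u := map_neg f u
    rw [this] at hfs
    linarith
  -- positivity of ∫ f over C
  have hfint : IntegrableOn (fun x => f x) C volume :=
    ContinuousOn.integrableOn_compact hCcompact (f.continuous.continuousOn)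
  have hCmeas : MeasurableSet C := hCcl.measurableSet
  have hpos : 0 < ∫ x in C, f x ∂volume := by
    rw [setIntegral_pos_iff_support_of_nonneg_ae ?_ hfint]
    · set U : Set (Fin d → ℝ) :=
        interior K ∩ {x | N x < R} ∩ {x | 0 < f x} with hU
      have hUopen : IsOpen U :=
        ((isOpen_interior.inter (isOpen_lt hNcont continuous_const)).inter
          (isOpen_lt continuous_const f.continuous))
      have hUsub : U ⊆ Function.support f ∩ C := by
        rintro x ⟨⟨hx1, hx2⟩, hx3⟩
        exact ⟨ne_of_gt hx3, interior_subset hx1, (le_of_lt hx2 : N x ≤ R)⟩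
      have huU : u ∈ U := ⟨⟨hu₀, by rw [Set.mem_setOf_eq, hR]; linarith⟩, hfu⟩
      calc (0 : ENNReal) < volume U := hUopen.measure_pos volume ⟨u, huU⟩
        _ ≤ volume (Function.support f ∩ C) := measure_mono hUsub
    · refine (ae_restrict_iff' hCmeas).mpr (ae_of_all _ ?_)
      intro x hx
      exact hfnonneg x (hCsubK hx)
  have hfb : 0 < f b := by
    rw [hb, ← f.integral_comp_comm hint]
    exact hpos
  have hbne : b ≠ 0 := by
    intro hc
    rw [hc, map_zero] at hfb
    exact lt_irrefl 0 hfb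
  -- invariant line
  apply hirr
  refine ⟨Submodule.span ℝ {b}, ?_, ?_, ?_⟩
  · simpa [Submodule.span_singleton_eq_bot] using hbne
  · intro htop
    have h1 : Module.finrank ℝ (Submodule.span ℝ {b}) = 1 := finrank_span_singleton hbne
    rw [htop] at h1
    have h2 : Module.finrank ℝ (⊤ : Submodule ℝ (Fin d → ℝ)) = d := by
      rw [finrank_top]
      simp [Module.finrank_pi]
    omega
  · intro A hA x hx
    obtain ⟨c, rfl⟩ := Submodule.mem_span_singleton.mp hx
    rw [Matrix.mulVec_smul, hfix A hA]
    exact Submodule.smul_mem _ c (Submodule.mem_span_singleton_self b)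

/-- Every irreducible subgroup of `SO(d)` for odd `d ≥ 3` is Perron and has
no invariant proper cone. -/
theorem irreducible_subgroup_SO_odd
    {d : ℕ} (hd : 3 ≤ d) (hodd : Odd d)
    (G : Set (Matrix (Fin d) (Fin d) ℝ))
    (hSO : ∀ A ∈ G, Aᵀ * A = 1 ∧ A.det = 1)
    (hone : (1 : Matrix (Fin d) (Fin d) ℝ) ∈ G)
    (hmul : ∀ A ∈ G, ∀ B ∈ G, A * B ∈ G)
    (hinv : ∀ A ∈ G, A⁻¹ ∈ G)
    (hirr : MatIrreducible G) :
    (∀ A ∈ G, HasPerronEigenvalue A) ∧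
      ¬ ∃ K : Set (Fin d → ℝ), IsProperCone K ∧ ∀ A ∈ G, ∀ x ∈ K, A.mulVec x ∈ K := by
  constructor
  · intro A hA
    obtain ⟨hAo, hAdet⟩ := hSO A hA
    have hspec := aux_spec_one hodd hAo hAdet
    refine ⟨by rw [hspec]; norm_num, ?_⟩
    obtain ⟨v, hv, hAv⟩ := aux_fixed_vec hodd hAo hAdet
    exact ⟨v, hv, by rw [hspec, one_smul]; exact hAv⟩
  · rintro ⟨K, hK, hKinv⟩
    exact aux_no_cone hd G hSO hinv hirr K hK hKinv
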